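/- For every p > 0, as A → 0⁺, J₀(A) ~ (16Bp²/(3(2p+3)(4p+3)))·A^{−3/(2p)}; that is, lim_{A→0⁺} A^{3/(2p)} J₀(A) = 16Bp²/(3(2p+3)(4p+3)), where B = Σ_{m=1}^∞ m^{−3}. Moreover J₀(A) = J₁(A) − J₂(A) for all A > 0. -/

import Mathlib

open Filter Topology

/-- The index set `Γ = {(j,l) : j,l ∈ ℤ₊}`. -/
abbrev Idx : Type := ℕ × ℕ

noncomputable section

/-- The sequence `a_ν = ((j+1)(l+1))^p` for `ν = (j,l)`. -/
def aT (p : ℝ) (ν : Idx) : ℝ := (((ν.1 : ℝ) + 1) * ((ν.2 : ℝ) + 1)) ^ p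

/-- The sequence `σ_ν = (j+l+1)^{1/2}` for `ν = (j,l)`. -/
def sigT (ν : Idx) : ℝ := ((ν.1 : ℝ) + (ν.2 : ℝ) + 1) ^ ((1 : ℝ) / 2)

/-- The constant `B = Σ_{m=1}^∞ m^{−3}`. -/
def Bsum : ℝ := ∑' m : ℕ, 1 / ((m : ℝ) + 1) ^ 3

/-- `J₁(A) = Σ_{ν∈Γ} σ_ν⁴ (1 − A a_ν²)₊`. -/
def J1fun (p A : ℝ) : ℝ :=
  ∑' ν : Idx, sigT ν ^ 4 * max (1 - A * aT p ν ^ 2) 0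

/-- `J₂(A) = A Σ_{ν∈Γ} a_ν² σ_ν⁴ (1 − A a_ν²)₊`. -/
def J2fun (p A : ℝ) : ℝ :=
  A * ∑' ν : Idx, aT p ν ^ 2 * sigT ν ^ 4 * max (1 - A * aT p ν ^ 2) 0

/-- `J₀(A) = Σ_{ν∈Γ} σ_ν⁴ (1 − A a_ν²)₊²`. -/
def J0fun (p A : ℝ) : ℝ :=
  ∑' ν : Idx, sigT ν ^ 4 * (max (1 - A * aT p ν ^ 2) 0) ^ 2

open Finset

lemma bern_up {x r : ℝ} (hx : 0 < x) (hr : 0 ≤ r) :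
    (r+1) * x^r ≤ (x+1)^(r+1) - x^(r+1) := by
  have hs : (-1:ℝ) ≤ 1/x := by have := le_of_lt (div_pos one_pos hx); linarith
  have h := one_add_mul_self_le_rpow_one_add hs (p := r+1) (by linarith)
  have hmul := mul_le_mul_of_nonneg_left h (le_of_lt (Real.rpow_pos_of_pos hx (r+1)))
  rw [← Real.mul_rpow hx.le (by positivity)] at hmul
  have h1 : x * (1 + 1/x) = x + 1 := by field_simp
  rw [h1] at hmul
  have h3 : x^(r+1) * (1 + (r+1)*(1/x)) = x^(r+1) + (r+1)*x^r := by
    rw [Real.rpow_add_one hx.ne' r]; field_simp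
  linarith [hmul, h3]

lemma bern_down {x r : ℝ} (hx : 1 ≤ x) (hr : 0 ≤ r) :
    x^(r+1) - (x-1)^(r+1) ≤ (r+1) * x^r := by
  have hx0 : 0 < x := lt_of_lt_of_le one_pos hx
  have h := one_add_mul_self_le_rpow_one_add (s := -(1/x)) (by
    rw [neg_le, neg_neg]; rw [div_le_iff₀ hx0]; linarith) (p := r+1) (by linarith)
  have hmul := mul_le_mul_of_nonneg_left h (le_of_lt (Real.rpow_pos_of_pos hx0 (r+1)))
  have hnn : (0:ℝ) ≤ 1 + -(1/x) := by
    have : 1/x ≤ 1 := by rw [div_le_one hx0]; linarith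
    linarith
  rw [← Real.mul_rpow hx0.le hnn] at hmul
  have h1 : x * (1 + -(1/x)) = x - 1 := by field_simp; ring
  rw [h1] at hmul
  have h3 : x^(r+1) * (1 + (r+1)*(-(1/x))) = x^(r+1) - (r+1)*x^r := by
    rw [Real.rpow_add_one hx0.ne' r]; field_simp; ring
  linarith [hmul, h3]

lemma sum_rpow_lower (r : ℝ) (hr : 0 ≤ r) (N : ℕ) :
    (N:ℝ)^(r+1)/(r+1) ≤ ∑ n ∈ Finset.range N, ((n:ℝ)+1)^r := by
  have hr1 : (0:ℝ) < r + 1 := by linarith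
  induction N with
  | zero => simp [Real.zero_rpow (by positivity : r+1 ≠ 0)]
  | succ N ih =>
    rw [Finset.sum_range_succ]
    have hb := bern_down (x := (N:ℝ)+1) (by simp) hr
    have h1 : ((N:ℝ)+1) - 1 = (N:ℝ) := by ring
    rw [h1] at hb
    have hd : ((N:ℝ)+1)^(r+1)/(r+1) - (N:ℝ)^(r+1)/(r+1) ≤ ((N:ℝ)+1)^r := by
      rw [div_sub_div_same, div_le_iff₀ hr1]; linarith
    push_cast
    linarith [ih, hd]

lemma sum_rpow_upper (r : ℝ) (hr : 0 ≤ r) (N : ℕ) :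
    ∑ n ∈ Finset.range N, ((n:ℝ)+1)^r ≤ ((N:ℝ)+1)^(r+1)/(r+1) := by
  have hr1 : (0:ℝ) < r + 1 := by linarith
  induction N with
  | zero => simp; positivity
  | succ N ih =>
    rw [Finset.sum_range_succ]
    have hb := bern_up (x := (N:ℝ)+1) (by positivity) hr
    have hd : ((N:ℝ)+1)^r ≤ (((N:ℝ)+1+1)^(r+1) - ((N:ℝ)+1)^(r+1))/(r+1) := by
      rw [le_div_iff₀ hr1]; linarith
    have he := div_sub_div_same (((N:ℝ)+1+1)^(r+1)) (((N:ℝ)+1)^(r+1)) (r+1)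
    push_cast
    linarith [ih, hd]

lemma keyR (r : ℝ) (hr : 0 ≤ r) :
    Tendsto (fun δ : ℝ => δ^(r+1) * ∑ n ∈ Finset.range ⌊1/δ⌋₊, ((n:ℝ)+1)^r)
      (𝓝[>] (0:ℝ)) (𝓝 (1/(r+1))) := by
  have hr1 : (0:ℝ) < r + 1 := by linarith
  have hlow : Tendsto (fun δ : ℝ => (1-δ)^(r+1)/(r+1)) (𝓝[>] (0:ℝ)) (𝓝 (1/(r+1))) := by
    have hc : Continuous (fun δ : ℝ => (1-δ)^(r+1)/(r+1)) :=
      ((continuous_const.sub continuous_id).rpow_const (fun x => Or.inr hr1.le)).div_const _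
    have := hc.tendsto 0
    simp only [sub_zero, Real.one_rpow] at this
    exact this.mono_left nhdsWithin_le_nhds
  have hup : Tendsto (fun δ : ℝ => (1+δ)^(r+1)/(r+1)) (𝓝[>] (0:ℝ)) (𝓝 (1/(r+1))) := by
    have hc : Continuous (fun δ : ℝ => (1+δ)^(r+1)/(r+1)) :=
      ((continuous_const.add continuous_id).rpow_const (fun x => Or.inr hr1.le)).div_const _
    have := hc.tendsto 0
    simp only [add_zero, Real.one_rpow] at this
    exact this.mono_left nhdsWithin_le_nhds
  have hmem : Set.Ioo (0:ℝ) 1 ∈ 𝓝[>] (0:ℝ) := by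
    apply Ioo_mem_nhdsGT_of_mem; constructor <;> norm_num
  refine tendsto_of_tendsto_of_tendsto_of_le_of_le' hlow hup ?_ ?_
  · filter_upwards [hmem] with δ hδ
    obtain ⟨hδ0, hδ1⟩ := hδ
    set N := ⌊1/δ⌋₊ with hN
    have hδp : (0:ℝ) < δ^(r+1) := Real.rpow_pos_of_pos hδ0 _
    have hNl : 1 - δ ≤ δ * N := by
      have h2 : 1/δ - 1 < (N:ℝ) := Nat.sub_one_lt_floor (1/δ)
      have := mul_lt_mul_of_pos_left h2 hδ0
      rw [mul_sub, mul_one_div, div_self hδ0.ne'] at this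
      linarith
    calc (1-δ)^(r+1)/(r+1) ≤ (δ*(N:ℝ))^(r+1)/(r+1) := by
          gcongr <;> linarith
      _ = δ^(r+1) * ((N:ℝ)^(r+1)/(r+1)) := by
          rw [Real.mul_rpow hδ0.le (Nat.cast_nonneg N)]; ring
      _ ≤ δ^(r+1) * ∑ n ∈ Finset.range N, ((n:ℝ)+1)^r := by
          have := sum_rpow_lower r hr N
          exact mul_le_mul_of_nonneg_left this hδp.le
  · filter_upwards [hmem] with δ hδ
    obtain ⟨hδ0, hδ1⟩ := hδ
    set N := ⌊1/δ⌋₊ with hN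
    have hδp : (0:ℝ) < δ^(r+1) := Real.rpow_pos_of_pos hδ0 _
    have hNu : δ * ((N:ℝ)+1) ≤ 1 + δ := by
      have h2 : (N:ℝ) ≤ 1/δ := Nat.floor_le (by positivity)
      have := mul_le_mul_of_nonneg_left h2 hδ0.le
      rw [mul_one_div, div_self hδ0.ne'] at this
      nlinarith
    calc δ^(r+1) * ∑ n ∈ Finset.range N, ((n:ℝ)+1)^r
        ≤ δ^(r+1) * (((N:ℝ)+1)^(r+1)/(r+1)) :=
          mul_le_mul_of_nonneg_left (sum_rpow_upper r hr N) hδp.le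
      _ = (δ*((N:ℝ)+1))^(r+1)/(r+1) := by
          rw [Real.mul_rpow hδ0.le (by positivity : (0:ℝ) ≤ (N:ℝ)+1)]; ring
      _ ≤ (1+δ)^(r+1)/(r+1) := by
          gcongr <;> positivity

noncomputable def hP (p u : ℝ) : ℝ := (max (1 - u^(2*p)) 0)^2

lemma hP_nonneg (p u : ℝ) : 0 ≤ hP p u := sq_nonneg _

lemma hP_le_one (p : ℝ) {u : ℝ} (hu : 0 ≤ u) : hP p u ≤ 1 := by
  have h1 : (0:ℝ) ≤ u^(2*p) := Real.rpow_nonneg hu _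
  have h2 : max (1 - u^(2*p)) 0 ≤ 1 := by
    apply max_le (by linarith) zero_le_one
  calc hP p u ≤ 1^2 := by
        apply pow_le_pow_left₀ (le_max_right _ _) h2
    _ = 1 := one_pow 2

lemma hP_eq_zero (p : ℝ) (hp : 0 < p) {u : ℝ} (hu : 1 ≤ u) : hP p u = 0 := by
  have h1 : (1:ℝ) ≤ u^(2*p) := by
    calc (1:ℝ) = 1^(2*p) := (Real.one_rpow _).symm
      _ ≤ u^(2*p) := Real.rpow_le_rpow zero_le_one hu (by linarith)
  have : max (1 - u^(2*p)) 0 = 0 := max_eq_right (by linarith)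
  rw [hP, this]; norm_num

lemma hP_expand (p : ℝ) (hp : 0 < p) {u : ℝ} (hu : 0 ≤ u) (hu1 : u ≤ 1) :
    hP p u = 1 - 2*u^(2*p) + u^(4*p) := by
  have h1 : u^(2*p) ≤ 1 := Real.rpow_le_one hu hu1 (by linarith)
  have h2 : max (1 - u^(2*p)) 0 = 1 - u^(2*p) := max_eq_left (by linarith)
  have h3 : (u^(2*p))^(2:ℕ) = u^(4*p) := by
    rw [← Real.rpow_natCast (u^(2*p)) 2, ← Real.rpow_mul hu]
    norm_num; ring_nf
  rw [hP, h2]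
  rw [sub_sq]
  rw [h3]; ring

noncomputable def GP (p δ : ℝ) : ℝ :=
  δ^3 * ∑' l : ℕ, ((l:ℝ)+1)^2 * hP p (δ*((l:ℝ)+1))

lemma GP_tsum_eq (p : ℝ) (hp : 0 < p) {δ : ℝ} (hδ : 0 < δ) :
    (∑' l : ℕ, ((l:ℝ)+1)^2 * hP p (δ*((l:ℝ)+1)))
      = ∑ l ∈ Finset.range ⌊1/δ⌋₊, ((l:ℝ)+1)^2 * hP p (δ*((l:ℝ)+1)) := by
  apply tsum_eq_sum
  intro l hl
  rw [Finset.mem_range, not_lt] at hl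
  have h1 : (1:ℝ) ≤ δ*((l:ℝ)+1) := by
    have h2 : (1/δ:ℝ) < ⌊1/δ⌋₊ + 1 := Nat.lt_floor_add_one _
    have h3 : ((⌊1/δ⌋₊:ℝ)+1) ≤ (l:ℝ)+1 := by
      have := Nat.cast_le (α := ℝ).mpr hl; linarith
    have := mul_lt_mul_of_pos_left h2 hδ
    rw [mul_one_div, div_self hδ.ne'] at this
    nlinarith
  rw [hP_eq_zero p hp h1, mul_zero]

lemma GP_nonneg (p : ℝ) {δ : ℝ} (hδ : 0 < δ) : 0 ≤ GP p δ := by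
  apply mul_nonneg (by positivity)
  apply tsum_nonneg
  intro l
  exact mul_nonneg (by positivity) (hP_nonneg _ _)

lemma GP_le (p : ℝ) (hp : 0 < p) {δ : ℝ} (hδ : 0 < δ) : GP p δ ≤ 8/3 := by
  rcases le_or_gt δ 1 with hδ1 | hδ1
  · set N := ⌊1/δ⌋₊ with hN
    have hb : GP p δ ≤ δ^3 * ∑ l ∈ Finset.range N, ((l:ℝ)+1)^2 := by
      rw [GP, GP_tsum_eq p hp hδ]
      apply mul_le_mul_of_nonneg_left ?_ (by positivity)
      apply Finset.sum_le_sum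
      intro l _
      have := hP_le_one p (u := δ*((l:ℝ)+1)) (by positivity)
      nlinarith [hP_nonneg p (δ*((l:ℝ)+1)), sq_nonneg ((l:ℝ)+1)]
    have hs : ∑ l ∈ Finset.range N, ((l:ℝ)+1)^2 ≤ ((N:ℝ)+1)^((2:ℝ)+1)/((2:ℝ)+1) := by
      have := sum_rpow_upper 2 (by norm_num) N
      have he : ∀ l : ℕ, ((l:ℝ)+1)^(2:ℝ) = ((l:ℝ)+1)^2 := by
        intro l
        rw [← Real.rpow_natCast ((l:ℝ)+1) 2]; norm_num
      calc ∑ l ∈ Finset.range N, ((l:ℝ)+1)^2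
          = ∑ l ∈ Finset.range N, ((l:ℝ)+1)^(2:ℝ) := by
            apply Finset.sum_congr rfl; intro l _; rw [he l]
        _ ≤ ((N:ℝ)+1)^((2:ℝ)+1)/((2:ℝ)+1) := sum_rpow_upper 2 (by norm_num) N
    have hNu : δ * ((N:ℝ)+1) ≤ 2 := by
      have h2 : (N:ℝ) ≤ 1/δ := Nat.floor_le (by positivity)
      have := mul_le_mul_of_nonneg_left h2 hδ.le
      rw [mul_one_div, div_self hδ.ne'] at this
      nlinarith
    have h3 : ((N:ℝ)+1)^((2:ℝ)+1) = ((N:ℝ)+1)^3 := by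
      rw [← Real.rpow_natCast ((N:ℝ)+1) 3]; norm_num
    calc GP p δ ≤ δ^3 * (((N:ℝ)+1)^3/3) := by
          rw [h3] at hs; norm_num at hs
          exact hb.trans (mul_le_mul_of_nonneg_left hs (by positivity))
      _ = (δ*((N:ℝ)+1))^3/3 := by ring
      _ ≤ 2^3/3 := by
          gcongr
      _ = 8/3 := by norm_num
  · have hN : ⌊1/δ⌋₊ = 0 := by
      apply Nat.floor_eq_zero.mpr
      rw [div_lt_one hδ]; exact hδ1
    rw [GP, GP_tsum_eq p hp hδ, hN]
    norm_num

lemma rpow_add_two {x : ℝ} (hx : 0 < x) (s : ℝ) : x^(s+2) = x^s * x^2 := by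
  rw [Real.rpow_add hx]
  congr 1
  rw [← Real.rpow_natCast x 2]
  norm_num

lemma GP_closed (p : ℝ) (hp : 0 < p) {δ : ℝ} (hδ : 0 < δ) :
    GP p δ = δ^((2:ℝ)+1) * (∑ n ∈ Finset.range ⌊1/δ⌋₊, ((n:ℝ)+1)^(2:ℝ))
      - 2*(δ^((2*p+2)+1) * (∑ n ∈ Finset.range ⌊1/δ⌋₊, ((n:ℝ)+1)^(2*p+2)))
      + δ^((4*p+2)+1) * (∑ n ∈ Finset.range ⌊1/δ⌋₊, ((n:ℝ)+1)^(4*p+2)) := by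
  set N := ⌊1/δ⌋₊ with hN
  have hNle : δ * (N:ℝ) ≤ 1 := by
    have h2 : (N:ℝ) ≤ 1/δ := Nat.floor_le (by positivity)
    have := mul_le_mul_of_nonneg_left h2 hδ.le
    rwa [mul_one_div, div_self hδ.ne'] at this
  rw [GP, GP_tsum_eq p hp hδ, ← hN]
  have hterm : ∀ l ∈ Finset.range N,
      ((l:ℝ)+1)^2 * hP p (δ*((l:ℝ)+1))
        = ((l:ℝ)+1)^(2:ℝ) - (2*δ^(2*p)) * ((l:ℝ)+1)^(2*p+2)
          + δ^(4*p) * ((l:ℝ)+1)^(4*p+2) := by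
    intro l hl
    rw [Finset.mem_range] at hl
    have hl1 : (0:ℝ) < (l:ℝ)+1 := by positivity
    have hu1 : δ*((l:ℝ)+1) ≤ 1 := by
      have : ((l:ℝ)+1) ≤ (N:ℝ) := by
        have := Nat.cast_le (α := ℝ).mpr (Nat.succ_le_of_lt hl); push_cast at this; linarith
      nlinarith
    rw [hP_expand p hp (by positivity) hu1]
    rw [Real.mul_rpow hδ.le hl1.le, Real.mul_rpow hδ.le hl1.le]
    rw [rpow_add_two hl1 (2*p), rpow_add_two hl1 (4*p)]
    rw [← Real.rpow_natCast ((l:ℝ)+1) 2]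
    push_cast
    ring
  rw [Finset.sum_congr rfl hterm]
  rw [Finset.sum_add_distrib, Finset.sum_sub_distrib]
  rw [← Finset.mul_sum, ← Finset.mul_sum]
  have hs2 : ∑ x ∈ Finset.range N, ((x:ℝ)+1)^((2:ℝ))
      = ∑ x ∈ Finset.range N, ((x:ℝ)+1)^(2:ℕ) := by
    apply Finset.sum_congr rfl
    intro x _
    rw [← Real.rpow_natCast ((x:ℝ)+1) 2]
    norm_num
  have hd3 : (δ:ℝ)^3 = δ^((2:ℝ)+1) := by
    rw [← Real.rpow_natCast δ 3]; norm_num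
  have hd2 : δ^((2*p+2)+1) = δ^(2*p) * δ^3 := by
    rw [← Real.rpow_natCast δ 3, ← Real.rpow_add hδ]; ring_nf
  have hd4 : δ^((4*p+2)+1) = δ^(4*p) * δ^3 := by
    rw [← Real.rpow_natCast δ 3, ← Real.rpow_add hδ]; ring_nf
  rw [hs2, hd2, hd4, ← hd3]
  ring

lemma GP_tendsto (p : ℝ) (hp : 0 < p) :
    Tendsto (GP p) (𝓝[>] (0:ℝ)) (𝓝 (1/3 - 2/(2*p+3) + 1/(4*p+3))) := by
  have k1 := keyR 2 (by norm_num)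
  have k2 := keyR (2*p+2) (by linarith)
  have k3 := keyR (4*p+2) (by linarith)
  have T := (k1.sub (k2.const_mul 2)).add k3
  have heq : ∀ᶠ δ in 𝓝[>] (0:ℝ),
      ((fun δ : ℝ => δ^((2:ℝ)+1) * ∑ n ∈ Finset.range ⌊1/δ⌋₊, ((n:ℝ)+1)^(2:ℝ)) δ
        - 2*((fun δ : ℝ => δ^((2*p+2)+1) * ∑ n ∈ Finset.range ⌊1/δ⌋₊, ((n:ℝ)+1)^(2*p+2)) δ)
        + (fun δ : ℝ => δ^((4*p+2)+1) * ∑ n ∈ Finset.range ⌊1/δ⌋₊, ((n:ℝ)+1)^(4*p+2)) δ)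
      = GP p δ := by
    filter_upwards [self_mem_nhdsWithin] with δ hδ
    exact (GP_closed p hp hδ).symm
  have hthis := T.congr' heq
  have hcc : (1:ℝ)/(2+1) - 2*(1/(2*p+2+1)) + 1/(4*p+2+1)
      = 1/3 - 2/(2*p+3) + 1/(4*p+3) := by ring_nf
  rw [hcc] at hthis
  exact hthis

lemma sum_inv_le_two_sqrt (M : ℕ) :
    ∑ j ∈ Finset.range M, 1/((j:ℝ)+1) ≤ 2*Real.sqrt M := by
  induction M with
  | zero => simp
  | succ M ih =>
    rw [Finset.sum_range_succ]
    have hs : Real.sqrt M ^ 2 = (M:ℝ) := Real.sq_sqrt (Nat.cast_nonneg M)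
    have ht : Real.sqrt ((M:ℕ)+1:ℕ) ^ 2 = ((M:ℝ)+1) := by
      rw [Real.sq_sqrt (Nat.cast_nonneg _)]; push_cast; ring
    have hs0 : 0 ≤ Real.sqrt M := Real.sqrt_nonneg _
    have ht0 : 0 ≤ Real.sqrt ((M:ℕ)+1:ℕ) := Real.sqrt_nonneg _
    set s := Real.sqrt M
    set t := Real.sqrt ((M:ℕ)+1:ℕ)
    have ht1 : 1 ≤ t := by nlinarith [ht, ht0]
    have key : 1 ≤ 2*t*(t - s) := by
      nlinarith [sq_nonneg (2*t^2 - 1 - 2*t*s), sq_nonneg (t-s), sq_nonneg (t+s)]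
    have h2 : 1/((M:ℝ)+1) ≤ 2*(t-s) := by
      rw [div_le_iff₀ (by positivity)]
      nlinarith [key, ht, ht1, sq_nonneg t]
    push_cast at *
    linarith

lemma Q_le (p : ℝ) (hp : 0 < p) {δ : ℝ} (hδ : 0 < δ) :
    ∑' l : ℕ, ((l:ℝ)+1) * hP p (δ*((l:ℝ)+1)) ≤ 1/δ^2 := by
  set N := ⌊1/δ⌋₊ with hN
  have heq : ∑' l : ℕ, ((l:ℝ)+1) * hP p (δ*((l:ℝ)+1))
      = ∑ l ∈ Finset.range N, ((l:ℝ)+1) * hP p (δ*((l:ℝ)+1)) := by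
    apply tsum_eq_sum
    intro l hl
    rw [Finset.mem_range, not_lt] at hl
    have h2 : (1/δ:ℝ) < N + 1 := Nat.lt_floor_add_one _
    have h3 : ((N:ℝ)+1) ≤ (l:ℝ)+1 := by
      have := Nat.cast_le (α := ℝ).mpr hl; linarith
    have h1 : (1:ℝ) ≤ δ*((l:ℝ)+1) := by
      have := mul_lt_mul_of_pos_left h2 hδ
      rw [mul_one_div, div_self hδ.ne'] at this
      nlinarith
    rw [hP_eq_zero p hp h1, mul_zero]
  rw [heq]
  have hNle : (N:ℝ) ≤ 1/δ := Nat.floor_le (by positivity)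
  calc ∑ l ∈ Finset.range N, ((l:ℝ)+1) * hP p (δ*((l:ℝ)+1))
      ≤ ∑ l ∈ Finset.range N, (N:ℝ) := by
        apply Finset.sum_le_sum
        intro l hl
        rw [Finset.mem_range] at hl
        have h4 : ((l:ℝ)+1) ≤ (N:ℝ) := by
          have := Nat.cast_le (α := ℝ).mpr (Nat.succ_le_of_lt hl); push_cast at this; linarith
        have h5 := hP_le_one p (u := δ*((l:ℝ)+1)) (by positivity)
        have h6 := hP_nonneg p (δ*((l:ℝ)+1))
        nlinarith
    _ = (N:ℝ)*(N:ℝ) := by rw [Finset.sum_const, Finset.card_range, nsmul_eq_mul]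
    _ ≤ (1/δ)*(1/δ) := by
        apply mul_le_mul hNle hNle (Nat.cast_nonneg N) (by positivity)
    _ = 1/δ^2 := by ring

lemma one_le_ed {ε x y : ℝ} (hε : 0 < ε) (hx : 1/ε < x) (hy : 1 ≤ y) :
    1 ≤ ε * (x * y) := by
  have h1 : 1 < ε * x := by
    have := mul_lt_mul_of_pos_left hx hε
    rwa [mul_one_div, div_self hε.ne'] at this
  nlinarith

lemma summable_one (p : ℝ) (hp : 0 < p) {δ : ℝ} (hδ : 0 < δ) (g : ℕ → ℝ) :
    Summable (fun l : ℕ => g l * hP p (δ*((l:ℝ)+1))) := by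
  apply summable_of_ne_finset_zero (s := Finset.range ⌊1/δ⌋₊)
  intro l hl
  rw [Finset.mem_range, not_lt] at hl
  have h2 : (1/δ:ℝ) < ⌊1/δ⌋₊ + 1 := Nat.lt_floor_add_one _
  have h3 : ((⌊1/δ⌋₊:ℝ)+1) ≤ (l:ℝ)+1 := by
    have := Nat.cast_le (α := ℝ).mpr hl; linarith
  have h1 : (1:ℝ) ≤ δ*((l:ℝ)+1) := by
    have := one_le_ed hδ (lt_of_lt_of_le h2 h3) le_rfl
    rwa [mul_one] at this
  rw [hP_eq_zero p hp h1, mul_zero]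

lemma summable_two (p : ℝ) (hp : 0 < p) {ε : ℝ} (hε : 0 < ε) (g : Idx → ℝ) :
    Summable (fun ν : Idx => g ν * hP p (ε*(((ν.1:ℝ)+1)*((ν.2:ℝ)+1)))) := by
  set K := ⌊1/ε⌋₊ with hK
  apply summable_of_ne_finset_zero (s := Finset.range K ×ˢ Finset.range K)
  intro ν hν
  rw [Finset.mem_product, Finset.mem_range, Finset.mem_range, not_and_or, not_lt, not_lt] at hν
  have h2 : (1/ε:ℝ) < (K:ℝ) + 1 := Nat.lt_floor_add_one _
  have h1 : (1:ℝ) ≤ ε*(((ν.1:ℝ)+1)*((ν.2:ℝ)+1)) := by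
    rcases hν with hj | hl
    · have h3 : ((K:ℝ)+1) ≤ (ν.1:ℝ)+1 := by
        have := Nat.cast_le (α := ℝ).mpr hj; linarith
      exact one_le_ed hε (lt_of_lt_of_le h2 h3) (le_add_of_nonneg_left (Nat.cast_nonneg _))
    · have h3 : ((K:ℝ)+1) ≤ (ν.2:ℝ)+1 := by
        have := Nat.cast_le (α := ℝ).mpr hl; linarith
      rw [mul_comm ((ν.1:ℝ)+1) _]
      exact one_le_ed hε (lt_of_lt_of_le h2 h3) (le_add_of_nonneg_left (Nat.cast_nonneg _))
  rw [hP_eq_zero p hp h1, mul_zero]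


lemma Bsum_summable : Summable (fun m : ℕ => 1 / ((m : ℝ) + 1) ^ 3) := by
  have h0 : Summable (fun n : ℕ => 1/((n:ℝ))^3) := by
    rw [Real.summable_one_div_nat_pow]; norm_num
  have h1 := (summable_nat_add_iff 1).mpr h0
  apply h1.congr
  intro n
  push_cast
  ring

lemma main_tendsto (p : ℝ) (hp : 0 < p) :
    Tendsto (fun ε : ℝ => ∑' j : ℕ, (1/((j:ℝ)+1)^3) * GP p (ε*((j:ℝ)+1)))
      (𝓝[>] (0:ℝ)) (𝓝 (Bsum * (1/3 - 2/(2*p+3) + 1/(4*p+3)))) := by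
  set I := (1:ℝ)/3 - 2/(2*p+3) + 1/(4*p+3) with hI
  have hBs : Summable (fun j : ℕ => (8/3) * (1/((j:ℝ)+1)^3)) := Bsum_summable.mul_left _
  have hmain := tendsto_tsum_of_dominated_convergence (f := fun (ε : ℝ) (j : ℕ) =>
      (1/((j:ℝ)+1)^3) * GP p (ε*((j:ℝ)+1)))
      (g := fun j : ℕ => (1/((j:ℝ)+1)^3) * I) (𝓕 := 𝓝[>] (0:ℝ)) hBs ?_ ?_
  · have heq : ∑' j : ℕ, (1/((j:ℝ)+1)^3) * I = Bsum * I := by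
      rw [tsum_mul_right, Bsum]
    rwa [heq] at hmain
  · intro j
    have hscale : Tendsto (fun ε : ℝ => ε*((j:ℝ)+1)) (𝓝[>] (0:ℝ)) (𝓝[>] (0:ℝ)) := by
      apply tendsto_nhdsWithin_of_tendsto_nhds_of_eventually_within
      · have hc : Continuous (fun ε : ℝ => ε*((j:ℝ)+1)) := continuous_id.mul continuous_const
        have := hc.tendsto 0
        rw [show (0:ℝ)*((j:ℝ)+1) = 0 by ring] at this
        exact this.mono_left nhdsWithin_le_nhds
      · filter_upwards [self_mem_nhdsWithin] with ε hε
        have : (0:ℝ) < ε := hε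
        have : (0:ℝ) < ε*((j:ℝ)+1) := by positivity
        exact this
    exact ((GP_tendsto p hp).comp hscale).const_mul _
  · filter_upwards [self_mem_nhdsWithin] with ε hε
    intro j
    have hε0 : (0:ℝ) < ε := hε
    have hδ : (0:ℝ) < ε*((j:ℝ)+1) := by positivity
    rw [Real.norm_eq_abs, abs_mul, abs_of_nonneg (GP_nonneg p hδ),
      abs_of_nonneg (by positivity : (0:ℝ) ≤ 1/((j:ℝ)+1)^3)]
    have h1 := GP_le p hp hδ
    have h2 : (0:ℝ) ≤ 1/((j:ℝ)+1)^3 := by positivity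
    nlinarith

lemma err_abs_le (p : ℝ) (hp : 0 < p) {ε : ℝ} (hε : 0 < ε) :
    |∑' ν : Idx, ((((ν.1:ℝ)+(ν.2:ℝ)+1)^2 - ((ν.1:ℝ)+1)^2 - ((ν.2:ℝ)+1)^2)
        * hP p (ε*(((ν.1:ℝ)+1)*((ν.2:ℝ)+1))))|
      ≤ (8/ε^2) * Real.sqrt (1/ε) := by
  set c : Idx → ℝ := fun ν => ((ν.1:ℝ)+1)*((ν.2:ℝ)+1) with hc
  set r : Idx → ℝ := fun ν => ((ν.1:ℝ)+(ν.2:ℝ)+1)^2 - ((ν.1:ℝ)+1)^2 - ((ν.2:ℝ)+1)^2 with hr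
  set H : Idx → ℝ := fun ν => hP p (ε*(((ν.1:ℝ)+1)*((ν.2:ℝ)+1))) with hH
  have habs : ∀ ν : Idx, |r ν| ≤ 4 * c ν := by
    intro ν
    rw [abs_le]
    have h1 : (0:ℝ) ≤ (ν.1:ℝ) := Nat.cast_nonneg _
    have h2 : (0:ℝ) ≤ (ν.2:ℝ) := Nat.cast_nonneg _
    constructor <;> simp only [hr, hc] <;> nlinarith
  have hnorm : (fun ν : Idx => ‖r ν * H ν‖) = fun ν => |r ν| * H ν :=
    funext fun ν => by rw [Real.norm_eq_abs, abs_mul, abs_of_nonneg (hP_nonneg _ _)]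
  have hsum_abs : Summable (fun ν : Idx => |r ν| * H ν) := summable_two p hp hε _
  have hsum_4c : Summable (fun ν : Idx => (4 * c ν) * H ν) := summable_two p hp hε _
  have step1 : |∑' ν : Idx, r ν * H ν| ≤ ∑' ν : Idx, (4 * c ν) * H ν := by
    have t1 := norm_tsum_le_tsum_norm (f := fun ν : Idx => r ν * H ν) (by rw [hnorm]; exact hsum_abs)
    rw [hnorm, Real.norm_eq_abs] at t1
    refine t1.trans (Summable.tsum_le_tsum ?_ hsum_abs hsum_4c)
    intro ν
    exact mul_le_mul_of_nonneg_right (habs ν) (hP_nonneg _ _)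
  -- now bound the dominating sum
  set M := ⌊1/ε⌋₊ with hM
  have hinner : ∀ j : ℕ, Summable (fun l : ℕ => (4 * c (j,l)) * H (j,l)) := by
    intro j
    have hδ : (0:ℝ) < ε*((j:ℝ)+1) := by positivity
    apply (summable_one p hp hδ (fun l => 4 * c (j,l))).congr
    intro l
    simp only [hc, hH]
    rw [← mul_assoc (ε) _ _]
  have hiter : ∑' ν : Idx, (4 * c ν) * H ν = ∑' j : ℕ, ∑' l : ℕ, (4 * c (j,l)) * H (j,l) :=
    Summable.tsum_prod' hsum_4c hinner
  have hQ : ∀ j : ℕ, ∑' l : ℕ, (4 * c (j,l)) * H (j,l)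
      = (4*((j:ℝ)+1)) * ∑' l : ℕ, ((l:ℝ)+1) * hP p ((ε*((j:ℝ)+1))*((l:ℝ)+1)) := by
    intro j
    rw [← tsum_mul_left]
    apply tsum_congr
    intro l
    simp only [hc, hH]
    rw [show ε*(((j:ℝ)+1)*((l:ℝ)+1)) = (ε*((j:ℝ)+1))*((l:ℝ)+1) by ring]
    ring
  have houter0 : ∀ j : ℕ, j ∉ Finset.range M →
      (∑' l : ℕ, (4 * c (j,l)) * H (j,l)) = 0 := by
    intro j hj
    rw [Finset.mem_range, not_lt] at hj
    have h2 : (1/ε:ℝ) < (M:ℝ) + 1 := Nat.lt_floor_add_one _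
    have h3 : ((M:ℝ)+1) ≤ (j:ℝ)+1 := by
      have := Nat.cast_le (α := ℝ).mpr hj; linarith
    have : ∀ l : ℕ, (4 * c (j,l)) * H (j,l) = 0 := by
      intro l
      have h1 : (1:ℝ) ≤ ε*(((j:ℝ)+1)*((l:ℝ)+1)) :=
        one_le_ed hε (lt_of_lt_of_le h2 h3) (le_add_of_nonneg_left (Nat.cast_nonneg _))
      simp only [hH]
      rw [hP_eq_zero p hp h1, mul_zero]
    rw [tsum_congr this, tsum_zero]
  have hfin : ∑' j : ℕ, ∑' l : ℕ, (4 * c (j,l)) * H (j,l)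
      = ∑ j ∈ Finset.range M, ∑' l : ℕ, (4 * c (j,l)) * H (j,l) := tsum_eq_sum houter0
  have hbd : ∑ j ∈ Finset.range M, ∑' l : ℕ, (4 * c (j,l)) * H (j,l)
      ≤ (4/ε^2) * ∑ j ∈ Finset.range M, 1/((j:ℝ)+1) := by
    rw [Finset.mul_sum]
    apply Finset.sum_le_sum
    intro j _
    rw [hQ j]
    have hδ : (0:ℝ) < ε*((j:ℝ)+1) := by positivity
    have hq := Q_le p hp hδ
    calc (4*((j:ℝ)+1)) * ∑' l : ℕ, ((l:ℝ)+1) * hP p ((ε*((j:ℝ)+1))*((l:ℝ)+1))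
        ≤ (4*((j:ℝ)+1)) * (1/(ε*((j:ℝ)+1))^2) := by
          apply mul_le_mul_of_nonneg_left hq (by positivity)
      _ = 4/ε^2 * (1/((j:ℝ)+1)) := by
          field_simp
  have hharm := sum_inv_le_two_sqrt M
  have hMs : Real.sqrt M ≤ Real.sqrt (1/ε) := Real.sqrt_le_sqrt (Nat.floor_le (by positivity))
  calc |∑' ν : Idx, r ν * H ν| ≤ ∑' ν : Idx, (4 * c ν) * H ν := step1
    _ = ∑ j ∈ Finset.range M, ∑' l : ℕ, (4 * c (j,l)) * H (j,l) := by rw [hiter, hfin]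
    _ ≤ (4/ε^2) * ∑ j ∈ Finset.range M, 1/((j:ℝ)+1) := hbd
    _ ≤ (4/ε^2) * (2*Real.sqrt (1/ε)) := by
        apply mul_le_mul_of_nonneg_left (hharm.trans (by nlinarith)) (by positivity)
    _ = (8/ε^2) * Real.sqrt (1/ε) := by ring

lemma err_tendsto (p : ℝ) (hp : 0 < p) :
    Tendsto (fun ε : ℝ => ε^3 * ∑' ν : Idx, ((((ν.1:ℝ)+(ν.2:ℝ)+1)^2 - ((ν.1:ℝ)+1)^2
        - ((ν.2:ℝ)+1)^2) * hP p (ε*(((ν.1:ℝ)+1)*((ν.2:ℝ)+1)))))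
      (𝓝[>] (0:ℝ)) (𝓝 0) := by
  have hsq : Tendsto (fun ε : ℝ => 8*Real.sqrt ε) (𝓝[>] (0:ℝ)) (𝓝 0) := by
    have h1 : Tendsto (fun ε : ℝ => 8*Real.sqrt ε) (𝓝 (0:ℝ)) (𝓝 (8*Real.sqrt 0)) :=
      (Real.continuous_sqrt.tendsto 0).const_mul 8
    rw [Real.sqrt_zero, mul_zero] at h1
    exact h1.mono_left nhdsWithin_le_nhds
  have hneg : Tendsto (fun ε : ℝ => -(8*Real.sqrt ε)) (𝓝[>] (0:ℝ)) (𝓝 0) := by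
    have := hsq.neg; rwa [neg_zero] at this
  refine tendsto_of_tendsto_of_tendsto_of_le_of_le' hneg hsq ?_ ?_ <;>
    (filter_upwards [self_mem_nhdsWithin] with ε hε) <;>
    [(apply neg_le_of_abs_le); (apply le_of_abs_le)] <;>
  · have hε0 : (0:ℝ) < ε := hε
    have hb := err_abs_le p hp hε0
    have hss : Real.sqrt ε * Real.sqrt ε = ε := Real.mul_self_sqrt hε0.le
    have hspos : 0 < Real.sqrt ε := Real.sqrt_pos.mpr hε0
    have hrw : ε^3 * ((8/ε^2) * Real.sqrt (1/ε)) = 8*Real.sqrt ε := by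
      rw [one_div, Real.sqrt_inv]
      field_simp
      nlinarith [hss, hspos, sq_nonneg ε]
    calc |ε^3 * ∑' ν : Idx, ((((ν.1:ℝ)+(ν.2:ℝ)+1)^2 - ((ν.1:ℝ)+1)^2
            - ((ν.2:ℝ)+1)^2) * hP p (ε*(((ν.1:ℝ)+1)*((ν.2:ℝ)+1))))|
        = ε^3 * |∑' ν : Idx, ((((ν.1:ℝ)+(ν.2:ℝ)+1)^2 - ((ν.1:ℝ)+1)^2
            - ((ν.2:ℝ)+1)^2) * hP p (ε*(((ν.1:ℝ)+1)*((ν.2:ℝ)+1))))| := by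
          rw [abs_mul, abs_of_nonneg (by positivity : (0:ℝ) ≤ ε^3)]
      _ ≤ ε^3 * ((8/ε^2) * Real.sqrt (1/ε)) :=
          mul_le_mul_of_nonneg_left hb (by positivity)
      _ = 8*Real.sqrt ε := hrw

lemma core (p : ℝ) (hp : 0 < p) :
    Tendsto (fun ε : ℝ => ε^3 * ∑' ν : Idx,
        (((ν.1:ℝ)+(ν.2:ℝ)+1)^2 * hP p (ε*(((ν.1:ℝ)+1)*((ν.2:ℝ)+1)))))
      (𝓝[>] (0:ℝ)) (𝓝 (2 * (Bsum * (1/3 - 2/(2*p+3) + 1/(4*p+3))))) := by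
  have hT := ((main_tendsto p hp).const_mul 2).add (err_tendsto p hp)
  rw [add_zero] at hT
  apply hT.congr'
  filter_upwards [self_mem_nhdsWithin] with ε hε
  have hε0 : (0:ℝ) < ε := hε
  set H : Idx → ℝ := fun ν => hP p (ε*(((ν.1:ℝ)+1)*((ν.2:ℝ)+1))) with hH
  have s1 : Summable (fun ν : Idx => ((ν.1:ℝ)+1)^2 * H ν) := summable_two p hp hε0 _
  have s2 : Summable (fun ν : Idx => ((ν.2:ℝ)+1)^2 * H ν) := summable_two p hp hε0 _
  have s3 : Summable (fun ν : Idx => (((ν.1:ℝ)+(ν.2:ℝ)+1)^2 - ((ν.1:ℝ)+1)^2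
      - ((ν.2:ℝ)+1)^2) * H ν) := summable_two p hp hε0 _
  have hpt : ∀ ν : Idx, ((ν.1:ℝ)+(ν.2:ℝ)+1)^2 * H ν
      = ((ν.1:ℝ)+1)^2 * H ν + ((ν.2:ℝ)+1)^2 * H ν
        + (((ν.1:ℝ)+(ν.2:ℝ)+1)^2 - ((ν.1:ℝ)+1)^2 - ((ν.2:ℝ)+1)^2) * H ν := by
    intro ν; ring
  have hsplit : ∑' ν : Idx, ((ν.1:ℝ)+(ν.2:ℝ)+1)^2 * H ν
      = (∑' ν : Idx, ((ν.1:ℝ)+1)^2 * H ν) + (∑' ν : Idx, ((ν.2:ℝ)+1)^2 * H ν)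
        + ∑' ν : Idx, (((ν.1:ℝ)+(ν.2:ℝ)+1)^2 - ((ν.1:ℝ)+1)^2 - ((ν.2:ℝ)+1)^2) * H ν := by
    rw [tsum_congr hpt, Summable.tsum_add (s1.add s2) s3, Summable.tsum_add s1 s2]
  have hsymm : ∑' ν : Idx, ((ν.1:ℝ)+1)^2 * H ν = ∑' ν : Idx, ((ν.2:ℝ)+1)^2 * H ν := by
    have he := (Equiv.prodComm ℕ ℕ).tsum_eq (f := fun ν : Idx => ((ν.2:ℝ)+1)^2 * H ν)
    rw [← he]
    apply tsum_congr
    intro ν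
    simp only [hH, Equiv.prodComm_apply, Prod.snd_swap, Prod.fst_swap]
    rw [mul_comm ((ν.2:ℝ)+1) ((ν.1:ℝ)+1)]
  have hinner2 : ∀ j : ℕ, Summable (fun l : ℕ => (((l:ℝ)+1)^2) * H (j,l)) := by
    intro j
    have hδ : (0:ℝ) < ε*((j:ℝ)+1) := by positivity
    apply (summable_one p hp hδ (fun l => ((l:ℝ)+1)^2)).congr
    intro l
    simp only [hH]
    rw [← mul_assoc ε _ _]
  have hmain : ε^3 * ∑' ν : Idx, ((ν.2:ℝ)+1)^2 * H ν
      = ∑' j : ℕ, (1/((j:ℝ)+1)^3) * GP p (ε*((j:ℝ)+1)) := by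
    rw [Summable.tsum_prod' s2 hinner2, ← tsum_mul_left]
    apply tsum_congr
    intro j
    have hj3 : ((j:ℝ)+1)^3 ≠ 0 := by positivity
    rw [GP]
    have harg : ∑' l : ℕ, ((l:ℝ)+1)^2 * hP p ((ε*((j:ℝ)+1))*((l:ℝ)+1))
        = ∑' l : ℕ, ((l:ℝ)+1)^2 * H (j,l) := by
      apply tsum_congr
      intro l
      simp only [hH]
      rw [mul_assoc ε _ _]
    rw [harg]
    field_simp
  calc 2 * (∑' j : ℕ, (1/((j:ℝ)+1)^3) * GP p (ε*((j:ℝ)+1)))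
        + ε^3 * ∑' ν : Idx, (((ν.1:ℝ)+(ν.2:ℝ)+1)^2 - ((ν.1:ℝ)+1)^2 - ((ν.2:ℝ)+1)^2) * H ν
      = 2 * (ε^3 * ∑' ν : Idx, ((ν.2:ℝ)+1)^2 * H ν)
        + ε^3 * ∑' ν : Idx, (((ν.1:ℝ)+(ν.2:ℝ)+1)^2 - ((ν.1:ℝ)+1)^2 - ((ν.2:ℝ)+1)^2) * H ν := by
        rw [hmain]
    _ = ε^3 * ∑' ν : Idx, ((ν.1:ℝ)+(ν.2:ℝ)+1)^2 * H ν := by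
        rw [hsplit, hsymm]; ring


lemma sig4 (ν : Idx) : sigT ν ^ 4 = ((ν.1:ℝ)+(ν.2:ℝ)+1)^2 := by
  have hx : (0:ℝ) ≤ (ν.1:ℝ)+(ν.2:ℝ)+1 := by positivity
  rw [sigT, ← Real.rpow_natCast (((ν.1:ℝ)+(ν.2:ℝ)+1) ^ ((1:ℝ)/2)) 4, ← Real.rpow_mul hx]
  rw [show ((1:ℝ)/2)*((4:ℕ):ℝ) = ((2:ℕ):ℝ) by norm_num, Real.rpow_natCast]

lemma A_aT (p : ℝ) {ε : ℝ} (hε : 0 < ε) (ν : Idx) :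
    ε^(2*p) * aT p ν^2 = (ε*(((ν.1:ℝ)+1)*((ν.2:ℝ)+1)))^(2*p) := by
  have hc : (0:ℝ) < ((ν.1:ℝ)+1)*((ν.2:ℝ)+1) := by positivity
  rw [aT, ← Real.rpow_natCast ((((ν.1:ℝ)+1)*((ν.2:ℝ)+1))^p) 2, ← Real.rpow_mul hc.le]
  rw [show p*((2:ℕ):ℝ) = 2*p by push_cast; ring]
  rw [Real.mul_rpow hε.le hc.le]

lemma term_eq (p : ℝ) {ε : ℝ} (hε : 0 < ε) (ν : Idx) :
    sigT ν^4 * (max (1 - ε^(2*p) * aT p ν^2) 0)^2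
      = ((ν.1:ℝ)+(ν.2:ℝ)+1)^2 * hP p (ε*(((ν.1:ℝ)+1)*((ν.2:ℝ)+1))) := by
  rw [sig4, A_aT p hε, hP]

lemma summable_J (p : ℝ) (hp : 0 < p) {A : ℝ} (hA : 0 < A) (g : Idx → ℝ) :
    Summable (fun ν : Idx => g ν * max (1 - A * aT p ν^2) 0) := by
  set ε : ℝ := A^(1/(2*p)) with hεdef
  have hε : 0 < ε := Real.rpow_pos_of_pos hA _
  have hεA : ε^(2*p) = A := by
    rw [hεdef, ← Real.rpow_mul hA.le]
    rw [show (1/(2*p))*(2*p) = 1 by field_simp]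
    exact Real.rpow_one A
  set K := ⌊1/ε⌋₊ with hK
  apply summable_of_ne_finset_zero (s := Finset.range K ×ˢ Finset.range K)
  intro ν hν
  rw [Finset.mem_product, Finset.mem_range, Finset.mem_range, not_and_or, not_lt, not_lt] at hν
  have h2 : (1/ε:ℝ) < (K:ℝ) + 1 := Nat.lt_floor_add_one _
  have h1 : (1:ℝ) ≤ ε*(((ν.1:ℝ)+1)*((ν.2:ℝ)+1)) := by
    rcases hν with hj | hl
    · have h3 : ((K:ℝ)+1) ≤ (ν.1:ℝ)+1 := by
        have := Nat.cast_le (α := ℝ).mpr hj; linarith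
      exact one_le_ed hε (lt_of_lt_of_le h2 h3) (le_add_of_nonneg_left (Nat.cast_nonneg _))
    · have h3 : ((K:ℝ)+1) ≤ (ν.2:ℝ)+1 := by
        have := Nat.cast_le (α := ℝ).mpr hl; linarith
      rw [mul_comm ((ν.1:ℝ)+1) _]
      exact one_le_ed hε (lt_of_lt_of_le h2 h3) (le_add_of_nonneg_left (Nat.cast_nonneg _))
  have h4 : (1:ℝ) ≤ A * aT p ν^2 := by
    rw [← hεA, A_aT p hε]
    calc (1:ℝ) = 1^(2*p) := (Real.one_rpow _).symm
      _ ≤ (ε*(((ν.1:ℝ)+1)*((ν.2:ℝ)+1)))^(2*p) :=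
          Real.rpow_le_rpow zero_le_one h1 (by linarith)
  rw [max_eq_right (by linarith), mul_zero]

/-- For every `p > 0`, `J₀(A) ~ (16Bp²/(3(2p+3)(4p+3))) A^{−3/(2p)}` as `A → 0⁺`;
moreover `J₀(A) = J₁(A) − J₂(A)` for all `A > 0`. -/
theorem J0fun_asymptotics (p : ℝ) (hp : 0 < p) :
    Tendsto (fun A : ℝ => A ^ (3 / (2 * p)) * J0fun p A) (𝓝[>] (0 : ℝ))
      (𝓝 (16 * Bsum * p ^ 2 / (3 * (2 * p + 3) * (4 * p + 3)))) ∧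
    ∀ A : ℝ, 0 < A → J0fun p A = J1fun p A - J2fun p A := by
  constructor
  · have hp2 : (2*p+3) ≠ 0 := by positivity
    have hp4 : (4*p+3) ≠ 0 := by positivity
    have hconst : 2 * (Bsum * (1/3 - 2/(2*p+3) + 1/(4*p+3)))
        = 16 * Bsum * p ^ 2 / (3 * (2 * p + 3) * (4 * p + 3)) := by
      field_simp
      ring
    have hcomp : Tendsto (fun A : ℝ => A^(1/(2*p))) (𝓝[>] (0:ℝ)) (𝓝[>] (0:ℝ)) := by
      apply tendsto_nhdsWithin_of_tendsto_nhds_of_eventually_within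
      · have hct : ContinuousAt (fun x : ℝ => x^(1/(2*p))) 0 :=
          Real.continuousAt_rpow_const 0 (1/(2*p)) (Or.inr (by positivity))
        have := hct.tendsto
        rw [Real.zero_rpow (by positivity : (1/(2*p)) ≠ 0)] at this
        exact this.mono_left nhdsWithin_le_nhds
      · filter_upwards [self_mem_nhdsWithin] with A hA
        exact Real.rpow_pos_of_pos hA _
    have hfull := (core p hp).comp hcomp
    rw [hconst] at hfull
    apply hfull.congr'
    filter_upwards [self_mem_nhdsWithin] with A hA
    have hA0 : (0:ℝ) < A := hA
    set ε : ℝ := A^(1/(2*p)) with hεdef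
    have hε : 0 < ε := Real.rpow_pos_of_pos hA0 _
    have hεA : ε^(2*p) = A := by
      rw [hεdef, ← Real.rpow_mul hA0.le, show (1/(2*p))*(2*p) = 1 by field_simp]
      exact Real.rpow_one A
    have h3 : ε^3 = A^(3/(2*p)) := by
      rw [hεdef, ← Real.rpow_natCast (A^(1/(2*p))) 3, ← Real.rpow_mul hA0.le]
      congr 1
      push_cast
      field_simp
    have hJ : J0fun p A = ∑' ν : Idx,
        ((ν.1:ℝ)+(ν.2:ℝ)+1)^2 * hP p (ε*(((ν.1:ℝ)+1)*((ν.2:ℝ)+1))) := by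
      rw [J0fun, ← hεA]
      exact tsum_congr (term_eq p hε)
    show ε^3 * ∑' ν : Idx,
        ((ν.1:ℝ)+(ν.2:ℝ)+1)^2 * hP p (ε*(((ν.1:ℝ)+1)*((ν.2:ℝ)+1)))
      = A ^ (3/(2*p)) * J0fun p A
    rw [hJ, h3]
  · intro A hA
    have s1 := summable_J p hp hA (fun ν => sigT ν^4)
    have s2x : Summable (fun ν : Idx =>
        A * (aT p ν ^ 2 * sigT ν ^ 4 * max (1 - A * aT p ν ^ 2) 0)) := by
      apply (summable_J p hp hA (fun ν => A * (aT p ν^2 * sigT ν^4))).congr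
      intro ν
      ring
    rw [J0fun, J1fun, J2fun, ← tsum_mul_left, ← Summable.tsum_sub s1 s2x]
    apply tsum_congr
    intro ν
    rcases le_or_gt (1 - A * aT p ν^2) 0 with h | h
    · rw [max_eq_right h]
      ring
    · rw [max_eq_left h.le]
      ring

end
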